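/- Let C > 0 and α > 1. Suppose v : [0,∞) → ℝ is nonnegative and differentiable, and its derivative satisfies v'(t) ≤ -C·v(t)^α for all t ≥ 0. Then for every ε > 0 and every t ≥ ε^{1-α}/(C(α-1)) one has v(t) ≤ ε; in particular this time bound is independent of the initial value v(0). (This is the fixed-time attractivity case α > 1 of the Lyapunov comparison theorem.) -/

import Mathlib

/-- Fixed-time attractivity case `α > 1` of the Lyapunov comparison theorem: if a nonnegative
differentiable function `v` satisfies `v' ≤ -C v^α` on `[0,∞)`, then every sublevel set
`{v ≤ ε}` is reached within the uniform time `ε^{1-α}/(C(α-1))`, independently of `v 0`. -/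
theorem stmt1 (C α : ℝ) (hC : 0 < C) (hα : 1 < α)
    (v : ℝ → ℝ)
    (hnn : ∀ t, 0 ≤ t → 0 ≤ v t)
    (hdiff : ∀ t, 0 ≤ t → DifferentiableAt ℝ v t)
    (hineq : ∀ t, 0 ≤ t → deriv v t ≤ -C * v t ^ α) :
    ∀ ε : ℝ, 0 < ε → ∀ t, ε ^ (1 - α) / (C * (α - 1)) ≤ t → v t ≤ ε := by
  intro ε hε t hT
  by_contra hcon
  push_neg at hcon
  have hα1 : 0 < α - 1 := by linarith
  have hTpos : 0 < ε ^ (1 - α) / (C * (α - 1)) :=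
    div_pos (Real.rpow_pos_of_pos hε _) (by positivity)
  have ht0 : 0 < t := lt_of_lt_of_le hTpos hT
  -- v is antitone on [0,∞)
  have hanti : AntitoneOn v (Set.Ici 0) := by
    apply antitoneOn_of_deriv_nonpos (convex_Ici 0)
    · exact fun s hs => (hdiff s hs).continuousAt.continuousWithinAt
    · intro s hs
      rw [interior_Ici] at hs
      exact (hdiff s hs.le).differentiableWithinAt
    · intro s hs
      rw [interior_Ici] at hs
      have h1 := hineq s hs.le
      have h2 : 0 ≤ v s ^ α := Real.rpow_nonneg (hnn s hs.le) α
      nlinarith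
  -- on [0,t], v s > ε
  have hvpos : ∀ s ∈ Set.Icc (0:ℝ) t, ε < v s := by
    intro s hs
    exact lt_of_lt_of_le hcon (hanti hs.1 ht0.le hs.2)
  set c : ℝ := C * (α - 1) with hc
  have hcpos : 0 < c := by positivity
  -- the auxiliary function g s = v s ^ (1-α) - c * s is monotone on [0,t]
  have hW : ∀ s ∈ Set.Icc (0:ℝ) t,
      HasDerivAt (fun x => v x ^ (1 - α)) (deriv v s * (1 - α) * v s ^ (1 - α - 1)) s :=
    fun s hs => ((hdiff s hs.1).hasDerivAt).rpow_const (Or.inl (lt_trans hε (hvpos s hs)).ne')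
  have hlin : ∀ s : ℝ, HasDerivAt (fun x : ℝ => c * x) c s := fun s => by
    simpa using (hasDerivAt_id s).const_mul c
  have hg : MonotoneOn (fun s => v s ^ (1 - α) - c * s) (Set.Icc 0 t) := by
    apply monotoneOn_of_deriv_nonneg (convex_Icc 0 t)
    · exact fun s hs => ((hW s hs).sub (hlin s)).continuousAt.continuousWithinAt
    · intro s hs
      rw [interior_Icc] at hs
      exact ((hW s ⟨hs.1.le, hs.2.le⟩).sub
        (hlin s)).differentiableAt.differentiableWithinAt
    · intro s hs
      rw [interior_Icc] at hs
      have hsIcc : s ∈ Set.Icc (0:ℝ) t := ⟨hs.1.le, hs.2.le⟩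
      have hD : HasDerivAt (fun x => v x ^ (1 - α) - c * x)
          (deriv v s * (1 - α) * v s ^ (1 - α - 1) - c) s := (hW s hsIcc).sub (hlin s)
      rw [hD.deriv]
      have hvs : 0 < v s := lt_trans hε (hvpos s hsIcc)
      have h1 := hineq s hs.1.le
      have key : deriv v s * (1 - α) * v s ^ (1 - α - 1) ≥ c := by
        have h2 : 0 < v s ^ (1 - α - 1) := Real.rpow_pos_of_pos hvs _
        have h3 : v s ^ α * v s ^ (1 - α - 1) = v s ^ (0:ℝ) := by
          rw [← Real.rpow_add hvs]; ring_nf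
        rw [Real.rpow_zero] at h3
        have h4 : deriv v s * (1 - α) * v s ^ (1 - α - 1)
            ≥ (-C * v s ^ α) * (1 - α) * v s ^ (1 - α - 1) := by
          have : (1 - α) * v s ^ (1 - α - 1) ≤ 0 := by nlinarith
          nlinarith [mul_le_mul_of_nonpos_right h1 this]
        calc deriv v s * (1 - α) * v s ^ (1 - α - 1)
            ≥ (-C * v s ^ α) * (1 - α) * v s ^ (1 - α - 1) := h4
          _ = C * (α - 1) * (v s ^ α * v s ^ (1 - α - 1)) := by ring
          _ = c := by rw [h3]; ring
      linarith [key]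
  have hmono := hg ⟨le_refl 0, ht0.le⟩ ⟨ht0.le, le_refl t⟩ ht0.le
  simp only [mul_zero, sub_zero] at hmono
  -- conclude
  have hW0 : 0 ≤ v 0 ^ (1 - α) := Real.rpow_nonneg (hnn 0 le_rfl) _
  have hct : ε ^ (1 - α) ≤ c * t := by
    rw [hc]
    calc ε ^ (1 - α) = C * (α - 1) * (ε ^ (1 - α) / (C * (α - 1))) := by
          field_simp
      _ ≤ C * (α - 1) * t := by
          exact mul_le_mul_of_nonneg_left hT (by positivity)
  have hWt : ε ^ (1 - α) ≤ v t ^ (1 - α) := by linarith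
  have : v t ^ (1 - α) < ε ^ (1 - α) :=
    Real.rpow_lt_rpow_of_neg hε hcon (by linarith)
  linarith
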